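/- Suppose for each ij ∈ {00, 01, 10, 11} the coordinates (x_ij, y_ij) satisfy (1/√2) − 2δ ≤ |x_ij|, |y_ij| ≤ (1/√2) + 2δ with signs matching the ideal points ((±1/√2, ±1/√2)), and p, q ≥ (1 − 4√2·δ)/2 with p, q ∈ [0, 1]. Then the Pusey expression S = p(x_00 + y_00 + x_11 + y_11) + q(x_01 − y_01 + x_10 − y_10) + (y_10 − x_10 − x_11 − y_11) − 2 satisfies S ≥ 2√2 − 2 − 16δ + 32√2·δ². -/

import Mathlib

/-- Noise-bounded lower bound on Pusey's expression. -/
theorem stmt_2 (δ p q x00 y00 x01 y01 x10 y10 x11 y11 : ℝ)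
    (hδ0 : 0 ≤ δ) (hδ1 : δ < 1 / (4 * Real.sqrt 2))
    (hp0 : 0 ≤ p) (hp1 : p ≤ 1) (hp : (1 - 4 * Real.sqrt 2 * δ) / 2 ≤ p)
    (hq0 : 0 ≤ q) (hq1 : q ≤ 1) (hq : (1 - 4 * Real.sqrt 2 * δ) / 2 ≤ q)
    (hx00 : x00 ∈ Set.Icc (1 / Real.sqrt 2 - 2 * δ) (1 / Real.sqrt 2 + 2 * δ))
    (hy00 : y00 ∈ Set.Icc (1 / Real.sqrt 2 - 2 * δ) (1 / Real.sqrt 2 + 2 * δ))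
    (hx01 : x01 ∈ Set.Icc (1 / Real.sqrt 2 - 2 * δ) (1 / Real.sqrt 2 + 2 * δ))
    (hy01 : y01 ∈ Set.Icc (-(1 / Real.sqrt 2 + 2 * δ)) (-(1 / Real.sqrt 2 - 2 * δ)))
    (hx10 : x10 ∈ Set.Icc (-(1 / Real.sqrt 2 + 2 * δ)) (-(1 / Real.sqrt 2 - 2 * δ)))
    (hy10 : y10 ∈ Set.Icc (1 / Real.sqrt 2 - 2 * δ) (1 / Real.sqrt 2 + 2 * δ))
    (hx11 : x11 ∈ Set.Icc (-(1 / Real.sqrt 2 + 2 * δ)) (-(1 / Real.sqrt 2 - 2 * δ)))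
    (hy11 : y11 ∈ Set.Icc (-(1 / Real.sqrt 2 + 2 * δ)) (-(1 / Real.sqrt 2 - 2 * δ))) :
    p * (x00 + y00 + x11 + y11) + q * (x01 - y01 + x10 - y10)
      + (y10 - x10 - x11 - y11) - 2
      ≥ 2 * Real.sqrt 2 - 2 - 16 * δ + 32 * Real.sqrt 2 * δ^2 := by
  obtain ⟨hx00a, hx00b⟩ := hx00
  obtain ⟨hy00a, hy00b⟩ := hy00
  obtain ⟨hx01a, hx01b⟩ := hx01
  obtain ⟨hy01a, hy01b⟩ := hy01
  obtain ⟨hx10a, hx10b⟩ := hx10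
  obtain ⟨hy10a, hy10b⟩ := hy10
  obtain ⟨hx11a, hx11b⟩ := hx11
  obtain ⟨hy11a, hy11b⟩ := hy11
  have hs : Real.sqrt 2 > 0 := by positivity
  have hs2 : Real.sqrt 2 ^ 2 = 2 := Real.sq_sqrt (by norm_num)
  have hinv : 1 / Real.sqrt 2 = Real.sqrt 2 / 2 := by
    rw [eq_div_iff (by norm_num : (2:ℝ) ≠ 0)]
    field_simp
    exact hs2.symm
  have hδb : 4 * Real.sqrt 2 * δ < 1 := by
    rw [lt_div_iff₀ (by positivity)] at hδ1; linarith
  have h1 : p * (x00 + y00) ≥ p * (2 * (1 / Real.sqrt 2 - 2 * δ)) := by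
    linarith [mul_nonneg hp0 (by linarith : (0:ℝ) ≤ x00 + y00 - 2 * (1 / Real.sqrt 2 - 2 * δ))]
  have h2 : q * (x01 - y01) ≥ q * (2 * (1 / Real.sqrt 2 - 2 * δ)) := by
    linarith [mul_nonneg hq0 (by linarith : (0:ℝ) ≤ x01 - y01 - 2 * (1 / Real.sqrt 2 - 2 * δ))]
  have h3 : (p - 1) * (x11 + y11) ≥ (1 - p) * (2 * (1 / Real.sqrt 2 - 2 * δ)) := by
    linarith [mul_nonneg (sub_nonneg.mpr hp1) (by linarith : (0:ℝ) ≤ -(x11 + y11) - 2 * (1 / Real.sqrt 2 - 2 * δ))]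
  have h4 : (q - 1) * x10 ≥ (1 - q) * (1 / Real.sqrt 2 - 2 * δ) := by
    linarith [mul_nonneg (sub_nonneg.mpr hq1) (by linarith : (0:ℝ) ≤ -x10 - (1 / Real.sqrt 2 - 2 * δ))]
  have h5 : (1 - q) * y10 ≥ (1 - q) * (1 / Real.sqrt 2 - 2 * δ) := by
    linarith [mul_nonneg (sub_nonneg.mpr hq1) (by linarith : (0:ℝ) ≤ y10 - (1 / Real.sqrt 2 - 2 * δ))]
  have key : 8 * δ - 32 * Real.sqrt 2 * δ ^ 2 ≥ 0 := by
    linarith [mul_nonneg hδ0 (by linarith : (0:ℝ) ≤ 1 - 4 * Real.sqrt 2 * δ)]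
  rw [hinv] at h1 h2 h3 h4 h5
  linarith [h1, h2, h3, h4, h5, key]
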